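/- Let G be a compact Hausdorff abelian topological group. Then for every subgroup P ≤ Aut(G) (not necessarily closed), the topological semidirect product G ⋊ P is a minimal topological group. -/

import Mathlib

open scoped Topology

/-- The group of self-homeomorphisms of `X`, with composition as multiplication:
`(f * g) x = f (g x)`, identity `Homeomorph.refl` and inverse `Homeomorph.symm`. -/
instance homeoGroup (X : Type*) [TopologicalSpace X] : Group (X ≃ₜ X) where
  mul f g := g.trans f
  one := Homeomorph.refl X
  inv := Homeomorph.symm
  mul_assoc f g h := rfl
  one_mul f := rfl
  mul_one f := rfl
  inv_mul_cancel f := by ext x; exact f.symm_apply_apply x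

/-- The compact-open topology on the homeomorphism group `H(X)`, induced from the
compact-open topology on `C(X, X)`. -/
def coTop (X : Type*) [TopologicalSpace X] : TopologicalSpace (X ≃ₜ X) :=
  TopologicalSpace.induced (fun f : X ≃ₜ X => (f : C(X, X))) ContinuousMap.compactOpen

/-- The group `Aut(G)` of all topological group automorphisms of a topological group `G`
(group automorphisms that are homeomorphisms), as a subgroup of the homeomorphism
group of `G`. -/
def topAut (G : Type*) [Group G] [TopologicalSpace G] : Subgroup (G ≃ₜ G) where
  carrier := {f : G ≃ₜ G | ∀ a b : G, f (a * b) = f a * f b}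
  one_mem' := fun _ _ => rfl
  mul_mem' := by
    intro f g hf hg a b
    show f (g (a * b)) = f (g a) * f (g b)
    rw [hg, hf]
  inv_mem' := by
    intro f hf a b
    show f.symm (a * b) = f.symm a * f.symm b
    apply f.injective
    rw [hf]
    simp

/-- The compact-open topology on `Aut(G)`. -/
def autTop (G : Type*) [Group G] [TopologicalSpace G] : TopologicalSpace ↥(topAut G) :=
  TopologicalSpace.induced (Subtype.val : ↥(topAut G) → G ≃ₜ G) (coTop G)

/-- The tautological action of a subgroup `P ≤ Aut(G)` on `G`, as a homomorphism
`P →* MulAut G`. -/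
def actHom {G : Type*} [Group G] [TopologicalSpace G] (P : Subgroup ↥(topAut G)) :
    ↥P →* MulAut G where
  toFun p := MulEquiv.mk' p.1.1.toEquiv (fun a b => p.1.2 a b)
  map_one' := rfl
  map_mul' _ _ := rfl

/-- The topology on a subgroup `P ≤ Aut(G)`, inherited from the compact-open topology. -/
def subAutTop {G : Type*} [Group G] [TopologicalSpace G] (P : Subgroup ↥(topAut G)) :
    TopologicalSpace ↥P :=
  TopologicalSpace.induced (Subtype.val : ↥P → ↥(topAut G)) (autTop G)

/-- The product topology on the topological semidirect product `G ⋊ P`, whose underlying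
group is `SemidirectProduct G ↥P (actHom P)`, i.e. the multiplication is
`(g₁, p₁) * (g₂, p₂) = (g₁ * p₁ g₂, p₁ * p₂)`. -/
def sdpTop {G : Type*} [Group G] [TopologicalSpace G] (P : Subgroup ↥(topAut G)) :
    TopologicalSpace (G ⋊[actHom P] ↥P) :=
  TopologicalSpace.induced (fun x : G ⋊[actHom P] ↥P => (x.left, x.right))
    (@instTopologicalSpaceProd G ↥P _ (subAutTop P))

/-- A (Hausdorff) topological group `(G, τ)` is *minimal* if every Hausdorff group topology
on `G` coarser than `τ` equals `τ`. -/
def IsMinimalTopGroup (G : Type*) [Group G] (τ : TopologicalSpace G) : Prop :=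
  ∀ σ : TopologicalSpace G, τ ≤ σ → @IsTopologicalGroup G σ _ → @T2Space G σ → σ = τ

open Filter Set TopologicalSpace

section Aux
variable {G : Type*} [Group G] [TopologicalSpace G] (P : Subgroup ↥(topAut G))

/-- The map from `P` to `C(G,G)`. -/
def JP : ↥P → C(G, G) := fun p => (((p : ↥(topAut G)) : G ≃ₜ G) : C(G, G))

lemma subAutTop_eq :
    subAutTop P = TopologicalSpace.induced (JP P) ContinuousMap.compactOpen := by
  unfold subAutTop autTop coTop
  rw [induced_compose, induced_compose]
  rfl

lemma JP_mul (a b : ↥P) : JP P (a * b) = (JP P a).comp (JP P b) := rfl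

lemma JP_one : JP P 1 = ContinuousMap.id G := rfl

lemma actHom_apply (p : ↥P) (y : G) : (actHom P p) y = JP P p y := rfl

end Aux

section Aux2
variable {G : Type*} [CommGroup G] [TopologicalSpace G] (P : Subgroup ↥(topAut G))

lemma conj_inl (m : G ⋊[actHom P] ↥P) (y : G) :
    m * SemidirectProduct.inl y * m⁻¹ = SemidirectProduct.inl ((JP P m.right) y) := by
  ext
  · simp [SemidirectProduct.mul_left, SemidirectProduct.inv_left, SemidirectProduct.mul_right,
      map_inv, mul_comm, actHom_apply]
  · simp

end Aux2

open SemidirectProduct in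
/-- If `G` is a compact Hausdorff *abelian* topological group, then the
topological semidirect product `G ⋊ P` is a minimal topological group for every (not
necessarily closed) subgroup `P ≤ Aut(G)`. -/
theorem semidirectProduct_minimal_of_comm (G : Type*)
    [CommGroup G] [TopologicalSpace G] [IsTopologicalGroup G] [CompactSpace G] [T2Space G]
    (P : Subgroup ↥(topAut G)) :
    IsMinimalTopGroup (G ⋊[actHom P] ↥P) (sdpTop P) := by
  intro σ hle hσg hσ2
  letI : TopologicalSpace ↥P := TopologicalSpace.induced (JP P) ContinuousMap.compactOpen
  letI : TopologicalSpace (G ⋊[actHom P] ↥P) := σ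
  haveI : IsTopologicalGroup (G ⋊[actHom P] ↥P) := hσg
  haveI : T2Space (G ⋊[actHom P] ↥P) := hσ2
  -- nhds description of the product topology
  have hq : ∀ m : G ⋊[actHom P] ↥P, @nhds _ (sdpTop P) m
      = comap (fun x : G ⋊[actHom P] ↥P => (x.left, x.right)) (𝓝 (m.left, m.right)) := by
    intro m
    rw [sdpTop, subAutTop_eq]
    exact nhds_induced _ _
  -- the embedding of G
  have heτ : Continuous[_, sdpTop P] (fun g : G => (inl g : G ⋊[actHom P] ↥P)) := by
    rw [sdpTop, subAutTop_eq]
    exact continuous_induced_rng.mpr (continuous_id.prodMk continuous_const)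
  have heσ : Continuous (fun g : G => (inl g : G ⋊[actHom P] ↥P)) :=
    continuous_le_rng hle heτ
  have hembed : Topology.IsClosedEmbedding (fun g : G => (inl g : G ⋊[actHom P] ↥P)) :=
    heσ.isClosedEmbedding (fun a b h => by simpa using congrArg SemidirectProduct.left h)
  have hind := hembed.toIsEmbedding.toIsInducing
  -- the embedding of P
  have hinrτ : Continuous[_, sdpTop P] (fun p : ↥P => (inr p : G ⋊[actHom P] ↥P)) := by
    rw [sdpTop, subAutTop_eq]
    exact continuous_induced_rng.mpr (continuous_const.prodMk continuous_id)
  have hinrσ : Continuous (fun p : ↥P => (inr p : G ⋊[actHom P] ↥P)) :=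
    continuous_le_rng hle hinrτ
  -- the key step: the right coordinate is σ-continuous at 1, to the compact-open topology
  have hr : Tendsto (fun m : G ⋊[actHom P] ↥P => JP P m.right) (𝓝 1) (𝓝 (JP P 1)) := by
    rw [ContinuousMap.tendsto_nhds_compactOpen]
    intro K hK U hU hKU
    have hKU' : K ⊆ U := fun y hy => hKU hy
    have hU' : IsOpen[TopologicalSpace.induced (fun g : G => (inl g : G ⋊[actHom P] ↥P)) σ] U := by
      rw [← hind.eq_induced]; exact hU
    obtain ⟨Ω, hΩo, hΩe⟩ := isOpen_induced_iff.mp hU'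
    have hψ : Continuous (fun z : (G ⋊[actHom P] ↥P) × G => z.1 * (inl z.2) * z.1⁻¹) :=
      (continuous_fst.mul (heσ.comp continuous_snd)).mul continuous_fst.inv
    have hsub : ({1} : Set (G ⋊[actHom P] ↥P)) ×ˢ K
        ⊆ (fun z : (G ⋊[actHom P] ↥P) × G => z.1 * (inl z.2) * z.1⁻¹) ⁻¹' Ω := by
      rintro ⟨m, y⟩ ⟨hm, hy⟩
      simp only [Set.mem_singleton_iff] at hm
      subst hm
      have hyU : y ∈ (fun g : G => (inl g : G ⋊[actHom P] ↥P)) ⁻¹' Ω := by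
        rw [hΩe]; exact hKU' hy
      simpa using hyU
    obtain ⟨u, v, hu, hv, h1u, hKv, huv⟩ :=
      generalized_tube_lemma isCompact_singleton hK (hΩo.preimage hψ) hsub
    filter_upwards [hu.mem_nhds (h1u rfl)] with m hm
    intro x hx
    have hmem : (m, x) ∈ (fun z : (G ⋊[actHom P] ↥P) × G => z.1 * (inl z.2) * z.1⁻¹) ⁻¹' Ω :=
      huv ⟨hm, hKv hx⟩
    rw [Set.mem_preimage, conj_inl] at hmem
    have h2 : (JP P m.right) x ∈ (fun g : G => (inl g : G ⋊[actHom P] ↥P)) ⁻¹' Ω := hmem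
    rw [hΩe] at h2
    exact h2
  have hrP : Tendsto (fun m : G ⋊[actHom P] ↥P => m.right) (𝓝 1) (𝓝 (1 : ↥P)) := by
    rw [show (𝓝 (1 : ↥P)) = comap (JP P) (𝓝 (JP P 1)) from nhds_induced _ _]
    exact tendsto_comap_iff.mpr hr
  -- the left coordinate is σ-continuous at 1
  have hl : Tendsto (fun m : G ⋊[actHom P] ↥P => m.left) (𝓝 1) (𝓝 (1 : G)) := by
    have h2 : Tendsto (fun m : G ⋊[actHom P] ↥P => (inr m.right : G ⋊[actHom P] ↥P))
        (𝓝 1) (𝓝 1) := by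
      have := (hinrσ.tendsto (1 : ↥P)).comp hrP
      simpa [Function.comp_def] using this
    have t1 : Tendsto (fun m : G ⋊[actHom P] ↥P => m * (inr m.right)⁻¹) (𝓝 1) (𝓝 1) := by
      have := Filter.Tendsto.mul (tendsto_id (x := 𝓝 (1 : G ⋊[actHom P] ↥P))) h2.inv
      simpa using this
    have t2 : (fun m : G ⋊[actHom P] ↥P => m * (inr m.right)⁻¹)
        = fun m : G ⋊[actHom P] ↥P => (inl m.left : G ⋊[actHom P] ↥P) := by
      funext m
      exact (eq_mul_inv_iff_mul_eq.mpr (inl_left_mul_inr_right m)).symm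
    rw [t2] at t1
    refine hind.tendsto_nhds_iff.mpr ?_
    simpa [Function.comp_def] using t1
  -- conclude : σ-nhds of 1 refine τ-nhds of 1
  have key1 : (𝓝 (1 : G ⋊[actHom P] ↥P)) ≤ @nhds _ (sdpTop P) 1 := by
    rw [hq 1, ← map_le_iff_le_comap]
    exact hl.prodMk_nhds hrP
  -- base tendsto facts for the product topology
  have hbase : Tendsto (fun m : G ⋊[actHom P] ↥P => (m.left, m.right))
      (@nhds _ (sdpTop P) 1) (𝓝 ((1 : G), (1 : ↥P))) := by
    have : Tendsto (fun m : G ⋊[actHom P] ↥P => (m.left, m.right)) (@nhds _ (sdpTop P) 1)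
        (𝓝 (((1 : G ⋊[actHom P] ↥P)).left, ((1 : G ⋊[actHom P] ↥P)).right)) := by
      rw [hq 1]; exact tendsto_comap
    exact this
  have hbl : Tendsto (fun m : G ⋊[actHom P] ↥P => m.left) (@nhds _ (sdpTop P) 1) (𝓝 (1 : G)) :=
    (continuous_fst.tendsto _).comp hbase
  have hbr : Tendsto (fun m : G ⋊[actHom P] ↥P => m.right) (@nhds _ (sdpTop P) 1)
      (𝓝 (1 : ↥P)) := (continuous_snd.tendsto _).comp hbase
  -- finish
  refine le_antisymm (le_of_nhds_le_nhds fun x => ?_) hle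
  have hLx : Tendsto (fun m => x * m) (@nhds _ (sdpTop P) 1) (@nhds _ (sdpTop P) x) := by
    rw [hq x]
    rw [tendsto_comap_iff]
    have hcl : Tendsto (fun m : G ⋊[actHom P] ↥P => x.left * (JP P x.right) m.left)
        (@nhds _ (sdpTop P) 1) (𝓝 x.left) := by
      have hc : Continuous (fun y : G => x.left * (JP P x.right) y) :=
        continuous_const.mul (JP P x.right).continuous
      have h3 := (hc.tendsto (1 : G)).comp hbl
      have hone : x.left * (JP P x.right) (1 : G) = x.left := by
        rw [show (JP P x.right) (1 : G) = 1 from map_one (actHom P x.right), mul_one]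
      rw [hone] at h3
      exact h3
    have hcr : Tendsto (fun m : G ⋊[actHom P] ↥P => x.right * m.right)
        (@nhds _ (sdpTop P) 1) (𝓝 x.right) := by
      have hmc : Tendsto (fun p : ↥P => x.right * p) (𝓝 (1 : ↥P)) (𝓝 x.right) := by
        rw [show (𝓝 x.right) = comap (JP P) (𝓝 (JP P x.right)) from nhds_induced _ _,
          tendsto_comap_iff]
        have h1 : Tendsto (JP P) (𝓝 (1 : ↥P)) (𝓝 (JP P 1)) := by
          rw [show (𝓝 (1 : ↥P)) = comap (JP P) (𝓝 (JP P 1)) from nhds_induced _ _]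
          exact tendsto_comap
        have h2 := ((ContinuousMap.continuous_postcomp (JP P x.right)).tendsto (JP P 1)).comp h1
        have h4 : (fun p : ↥P => JP P (x.right * p))
            = fun p : ↥P => (JP P x.right).comp (JP P p) := by
          funext p; exact JP_mul P x.right p
        have h5 : (JP P x.right).comp (JP P 1) = JP P x.right := by
          rw [JP_one]; exact ContinuousMap.comp_id _
        rw [h5] at h2
        show Tendsto (fun p : ↥P => JP P (x.right * p)) (𝓝 (1 : ↥P)) (𝓝 (JP P x.right))
        rw [h4]
        exact h2
      exact hmc.comp hbr
    exact hcl.prodMk_nhds hcr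
  calc 𝓝 x = map (fun m => x * m) (𝓝 1) := (map_mul_left_nhds_one x).symm
    _ ≤ map (fun m => x * m) (@nhds _ (sdpTop P) 1) := map_mono key1
    _ ≤ @nhds _ (sdpTop P) x := hLx
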